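/- An abelian category A is locally finitely presented if and only if A is a Grothendieck category admitting a generating set consisting of compact objects. -/

import Mathlib

open CategoryTheory Limits Opposite

universe u

namespace Env

section Basics

variable {C : Type*} [Category C]

/-- `g` is a weak kernel of `f`. -/
def IsWeakKernel [Limits.HasZeroMorphisms C] {A B K : C} (f : B ⟶ A) (g : K ⟶ B) : Prop :=
  g ≫ f = 0 ∧ ∀ ⦃K' : C⦄ (g' : K' ⟶ B), g' ≫ f = 0 → ∃ t : K' ⟶ K, t ≫ g = g'

/-- `h` is a weak cokernel of `f`. -/
def IsWeakCokernel [Limits.HasZeroMorphisms C] {A B Q : C} (f : A ⟶ B) (h : B ⟶ Q) : Prop :=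
  f ≫ h = 0 ∧ ∀ ⦃Q' : C⦄ (h' : B ⟶ Q'), f ≫ h' = 0 → ∃ t : Q ⟶ Q', h ≫ t = h'

/-- A kernel–cokernel pair: `f ≫ g = 0`, `f` is a kernel of `g` and `g` is a cokernel of `f`. -/
structure IsKernelCokernelPair [Limits.HasZeroMorphisms C] {A B X : C}
    (f : A ⟶ B) (g : B ⟶ X) : Prop where
  zero : f ≫ g = 0
  isKernel : Nonempty (IsLimit (KernelFork.ofι f zero))
  isCokernel : Nonempty (IsColimit (CokernelCofork.ofπ g zero))

end Basics

lemma map_comp_zero {C : Type*} [Category C] [Preadditive C]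
    {D : Type*} [Category D] [Preadditive D]
    (F : C ⥤ D) (hF : F.Additive) {X Y Z : C} {f : X ⟶ Y} {g : Y ⟶ Z}
    (wzero : f ≫ g = 0) : F.map f ≫ F.map g = 0 := by
  haveI := hF
  rw [← F.map_comp, wzero, Functor.map_zero]

/-- A Quillen exact structure on an additive category: a distinguished class of conflations
(kernel–cokernel pairs) satisfying Quillen's axioms. -/
structure ExactStructure (E : Type*) [Category E] [Preadditive E] where
  /-- `conf f g` means that `(f, g)` is a conflation. -/
  conf : ∀ ⦃A B C : E⦄, (A ⟶ B) → (B ⟶ C) → Prop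
  conf_pair : ∀ ⦃A B C : E⦄ (f : A ⟶ B) (g : B ⟶ C), conf f g → IsKernelCokernelPair f g
  defl_id : ∀ X : E, ∃ (A : E) (f : A ⟶ X), conf f (𝟙 X)
  defl_comp : ∀ ⦃A B C : E⦄ (g : A ⟶ B) (g' : B ⟶ C),
    (∃ (K : E) (f : K ⟶ A), conf f g) → (∃ (K : E) (f : K ⟶ B), conf f g') →
    ∃ (K : E) (f : K ⟶ A), conf f (g ≫ g')
  defl_pullback : ∀ ⦃B C C' : E⦄ (g : B ⟶ C) (h : C' ⟶ C),
    (∃ (K : E) (f : K ⟶ B), conf f g) →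
    ∃ (B' : E) (p : B' ⟶ B) (q : B' ⟶ C') (w : p ≫ g = q ≫ h),
      (∃ (K : E) (f : K ⟶ B'), conf f q) ∧ Nonempty (IsLimit (PullbackCone.mk p q w))
  infl_pushout : ∀ ⦃A B A' : E⦄ (f : A ⟶ B) (h : A ⟶ A'),
    (∃ (C : E) (g : B ⟶ C), conf f g) →
    ∃ (B' : E) (p : B ⟶ B') (q : A' ⟶ B') (w : f ≫ p = h ≫ q),
      (∃ (C : E) (g : B' ⟶ C), conf q g) ∧ Nonempty (IsColimit (PushoutCocone.mk p q w))

section Exact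

variable {E : Type*} [Category E] [Preadditive E]

/-- `g` is a deflation for the exact structure `S`. -/
def ExactStructure.IsDeflation (S : ExactStructure E) {B C : E} (g : B ⟶ C) : Prop :=
  ∃ (K : E) (f : K ⟶ B), S.conf f g

/-- `f` is an inflation for the exact structure `S`. -/
def ExactStructure.IsInflation (S : ExactStructure E) {A B : E} (f : A ⟶ B) : Prop :=
  ∃ (C : E) (g : B ⟶ C), S.conf f g

/-- A functor from an exact category to an additive category is right exact if it is additive
and for every conflation `(f, g)`, `F g` is a cokernel of `F f`. -/
structure IsRightExact (S : ExactStructure E) {B : Type*} [Category B] [Preadditive B]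
    (F : E ⥤ B) : Prop where
  additive : F.Additive
  preserves : ∀ ⦃A X C : E⦄ (f : A ⟶ X) (g : X ⟶ C) (h : S.conf f g),
    Nonempty (IsColimit (CokernelCofork.ofπ (F.map g)
      (map_comp_zero F additive (S.conf_pair f g h).zero)))

/-- A functor from an exact category to an additive category is left exact if it is additive
and for every conflation `(f, g)`, `F f` is a kernel of `F g`. -/
structure IsLeftExact (S : ExactStructure E) {B : Type*} [Category B] [Preadditive B]
    (F : E ⥤ B) : Prop where
  additive : F.Additive
  preserves : ∀ ⦃A X C : E⦄ (f : A ⟶ X) (g : X ⟶ C) (h : S.conf f g),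
    Nonempty (IsLimit (KernelFork.ofι (F.map f)
      (map_comp_zero F additive (S.conf_pair f g h).zero)))

/-- `g : C ⟶ B` is an Ext-kernel of `f : B ⟶ A` (w.r.t. the exact structure `S`):
`g ≫ f = 0` and for every `g' : C' ⟶ B` with `g' ≫ f = 0` there is a deflation
`d : D ⟶ C'` such that `d ≫ g'` factors through `g`. -/
def IsExtKernel (S : ExactStructure E) {A B C : E} (f : B ⟶ A) (g : C ⟶ B) : Prop :=
  g ≫ f = 0 ∧ ∀ ⦃C' : E⦄ (g' : C' ⟶ B), g' ≫ f = 0 →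
    ∃ (D : E) (d : D ⟶ C'), S.IsDeflation d ∧ ∃ t : D ⟶ C, t ≫ g = d ≫ g'

/-- An exact category is left Ext-coherent if every morphism admits an Ext-kernel. -/
def LeftExtCoherent (S : ExactStructure E) : Prop :=
  ∀ ⦃B A : E⦄ (f : B ⟶ A), ∃ (C : E) (g : C ⟶ B), IsExtKernel S f g

end Exact

/-- An additive category is left coherent if every morphism admits a weak kernel. -/
def LeftCoherent (E : Type*) [Category E] [Preadditive E] : Prop :=
  ∀ ⦃B A : E⦄ (f : B ⟶ A), ∃ (K : E) (g : K ⟶ B), IsWeakKernel f g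

section MoreDefs

variable (C : Type*) [Category C] [Preadditive C]

/-- An additive functor between additive categories preserving cokernels: every morphism
which is a cokernel (of some morphism) is sent to a cokernel of its image. -/
structure PreservesCokernelsP {C : Type*} [Category C] [Preadditive C]
    {D : Type*} [Category D] [Preadditive D] (F : C ⥤ D) : Prop where
  additive : F.Additive
  preserves : ∀ ⦃X Y Z : C⦄ (f : X ⟶ Y) (c : Y ⟶ Z) (w : f ≫ c = 0),
    Nonempty (IsColimit (CokernelCofork.ofπ c w)) →
    Nonempty (IsColimit (CokernelCofork.ofπ (F.map c) (map_comp_zero F additive w)))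

/-- An additive category is left abelian if it has cokernels and for every morphism
`f : A ⟶ B` with cokernel `c : B ⟶ X` and every `g : D ⟶ B` with `g ≫ c = 0` there is
a morphism `d : E ⟶ D` which is a cokernel (of some morphism), such that `d ≫ g` factors
through `f`. -/
structure IsLeftAbelian : Prop where
  hasCokernels : HasCokernels C
  factor : ∀ ⦃A B X : C⦄ (f : A ⟶ B) (c : B ⟶ X) (w : f ≫ c = 0),
    Nonempty (IsColimit (CokernelCofork.ofπ c w)) →
    ∀ ⦃D : C⦄ (g : D ⟶ B), g ≫ c = 0 →
      ∃ (W E : C) (u : W ⟶ E) (d : E ⟶ D) (w' : u ≫ d = 0),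
        Nonempty (IsColimit (CokernelCofork.ofπ d w')) ∧ ∃ t : E ⟶ A, t ≫ f = d ≫ g

/-- A preadditive category (with its given preadditive structure) is abelian:
it has finite biproducts, kernels and cokernels, and every monomorphism and every
epimorphism is normal. -/
def IsAbelianP : Prop :=
  HasFiniteBiproducts C ∧ HasKernels C ∧ HasCokernels C ∧
    (∀ ⦃X Y : C⦄ (f : X ⟶ Y), Mono f → Nonempty (NormalMono f)) ∧
    (∀ ⦃X Y : C⦄ (f : X ⟶ Y), Epi f → Nonempty (NormalEpi f))

end MoreDefs

/-- An object `X` is compact (finitely presented) if `Hom(X, -)` preserves filtered colimits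
(indexed by small filtered categories in `Type u`). -/
def IsCompact {C : Type*} [Category C] (X : C) : Prop :=
  ∀ (J : Type u) (_ : SmallCategory J), IsFiltered J →
    Nonempty (PreservesColimitsOfShape J (coyoneda.obj (op X)))

section RexAbelian

variable {A : Type*} [Category A] [Abelian A] {B : Type*} [Category B] [Preadditive B]

/-- A functor from an abelian category (whose conflations are all kernel–cokernel pairs,
i.e. all short exact sequences) is right exact if it is additive and sends every short exact
sequence `(f, g)` to a diagram where `F g` is a cokernel of `F f`. -/
structure IsRightExactAb (F : A ⥤ B) : Prop where
  additive : F.Additive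
  preserves : ∀ ⦃X Y Z : A⦄ (f : X ⟶ Y) (g : Y ⟶ Z) (h : IsKernelCokernelPair f g),
    Nonempty (IsColimit (CokernelCofork.ofπ (F.map g) (map_comp_zero F additive h.zero)))

/-- A functor from an abelian category (whose conflations are all kernel–cokernel pairs,
i.e. all short exact sequences) is left exact if it is additive and sends every short exact
sequence `(f, g)` to a diagram where `F f` is a kernel of `F g`. -/
structure IsLeftExactAb (F : A ⥤ B) : Prop where
  additive : F.Additive
  preserves : ∀ ⦃X Y Z : A⦄ (f : X ⟶ Y) (g : Y ⟶ Z) (h : IsKernelCokernelPair f g),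
    Nonempty (IsLimit (KernelFork.ofι (F.map f) (map_comp_zero F additive h.zero)))

end RexAbelian

section Envelope

/-- `(A, i)` is a right abelian envelope of the exact category `(E, S)`: `i` is right exact
and for every abelian category `B`, precomposition with `i` induces an equivalence from the
category of right exact functors `A ⥤ B` to the category of right exact functors `E ⥤ B`.

The equivalence given by precomposition is expressed by: precomposition with `i` sends right
exact functors to right exact functors, it is fully faithful (whiskering is a bijection on
natural transformations) and essentially surjective (every right exact `E ⥤ B` is isomorphic
to some `i ⋙ G` with `G` right exact). -/
structure IsRightAbelianEnvelope.{u₀, w₀, v₁, w₁, v₂, w₂} {E : Type u₀} [Category.{w₀} E]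
    [Preadditive E] (S : ExactStructure E)
    {A : Type v₁} [Category.{w₁} A] [Abelian A] (i : E ⥤ A) : Prop where
  rightExact : IsRightExact S i
  comp_rightExact : ∀ (B : Type v₂) [Category.{w₂} B] [Abelian B] (G : A ⥤ B),
    IsRightExactAb G → IsRightExact S (i ⋙ G)
  whisker_bijective : ∀ (B : Type v₂) [Category.{w₂} B] [Abelian B] (G G' : A ⥤ B),
    IsRightExactAb G → IsRightExactAb G' →
      Function.Bijective (fun σ : G ⟶ G' => Functor.whiskerLeft i σ)
  essSurj : ∀ (B : Type v₂) [Category.{w₂} B] [Abelian B] (F : E ⥤ B),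
    IsRightExact S F → ∃ G : A ⥤ B, IsRightExactAb G ∧ Nonempty (i ⋙ G ≅ F)

/-- `(A, i)` is a left abelian envelope of the exact category `(E, S)`: the dual notion of
`IsRightAbelianEnvelope`, with left exact functors in place of right exact ones. -/
structure IsLeftAbelianEnvelope.{u₀, w₀, v₁, w₁, v₂, w₂} {E : Type u₀} [Category.{w₀} E]
    [Preadditive E] (S : ExactStructure E)
    {A : Type v₁} [Category.{w₁} A] [Abelian A] (i : E ⥤ A) : Prop where
  leftExact : IsLeftExact S i
  comp_leftExact : ∀ (B : Type v₂) [Category.{w₂} B] [Abelian B] (G : A ⥤ B),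
    IsLeftExactAb G → IsLeftExact S (i ⋙ G)
  whisker_bijective : ∀ (B : Type v₂) [Category.{w₂} B] [Abelian B] (G G' : A ⥤ B),
    IsLeftExactAb G → IsLeftExactAb G' →
      Function.Bijective (fun σ : G ⟶ G' => Functor.whiskerLeft i σ)
  essSurj : ∀ (B : Type v₂) [Category.{w₂} B] [Abelian B] (F : E ⥤ B),
    IsLeftExact S F → ∃ G : A ⥤ B, IsLeftExactAb G ∧ Nonempty (i ⋙ G ≅ F)

/-- A witness for the existence of a right abelian envelope of `(E, S)`: an abelian
category (with object type in `Type (u + 1)` and hom types in `Type u`) together with a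
right exact functor from `E` satisfying the universal property of the right abelian
envelope (where the test abelian categories are taken of the same size). -/
structure RightAbelianEnvelopeWitness {E : Type u} [SmallCategory E] [Preadditive E]
    (S : ExactStructure E) where
  A : Type (u + 1)
  [cat : Category.{u} A]
  [ab : Abelian A]
  i : E ⥤ A
  env : IsRightAbelianEnvelope.{u, u, u + 1, u, u + 1, u} S i

/-- Existence of a right abelian envelope of `(E, S)`. -/
def HasRightAbelianEnvelope {E : Type u} [SmallCategory E] [Preadditive E]
    (S : ExactStructure E) : Prop :=
  Nonempty (RightAbelianEnvelopeWitness S)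

end Envelope

section Lex

variable {E : Type u} [SmallCategory E] [Preadditive E]

/-- A functor `Eᵒᵖ ⥤ Ab` is left exact w.r.t. the exact structure `S` if it is additive and
sends every conflation `(f : A ⟶ B, g : B ⟶ C)` to an exact sequence
`0 ⟶ F C ⟶ F B ⟶ F A`: `F g.op` is injective and its image is the kernel of `F f.op`. -/
structure IsLexFunctor (S : ExactStructure E) (F : Eᵒᵖ ⥤ AddCommGrpCat.{u}) : Prop where
  additive : F.Additive
  inj : ∀ ⦃A B C : E⦄ (f : A ⟶ B) (g : B ⟶ C), S.conf f g →
    Function.Injective (F.map g.op)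
  ex : ∀ ⦃A B C : E⦄ (f : A ⟶ B) (g : B ⟶ C), S.conf f g →
    ∀ x : F.obj (op B), F.map f.op x = 0 ↔ ∃ y : F.obj (op C), F.map g.op y = x

/-- The category `Lex(E)` of left exact functors `Eᵒᵖ ⥤ Ab`. -/
abbrev LexCat (S : ExactStructure E) := ObjectProperty.FullSubcategory (IsLexFunctor S)

/-- The full subcategory of compact objects of `Lex(E)`. -/
abbrev LexCompact (S : ExactStructure E) :=
  ObjectProperty.FullSubcategory (fun F : LexCat S => IsCompact.{u} F)

lemma yoneda_isLex (S : ExactStructure E) (X : E) :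
    IsLexFunctor S (preadditiveYoneda.obj X) where
  additive := inferInstance
  inj := by
    intro A B C f g hc
    obtain ⟨w, hker, hcoker⟩ := S.conf_pair f g hc
    intro x y hxy
    exact Cofork.IsColimit.hom_ext hcoker.some hxy
  ex := by
    intro A B C f g hc
    obtain ⟨w, hker, hcoker⟩ := S.conf_pair f g hc
    intro x
    constructor
    · intro hx
      obtain ⟨y, hy⟩ := CokernelCofork.IsColimit.desc' hcoker.some x hx
      exact ⟨y, hy⟩
    · rintro ⟨y, rfl⟩
      first
        | (change f ≫ g ≫ (show C ⟶ X from y) = 0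
           rw [← Category.assoc, w, zero_comp])
        | (simp [preadditiveYoneda, w])

/-- The Yoneda embedding of `E` into `Lex(E)`, sending `X` to `Hom_E(-, X)`. -/
def yonedaLex (S : ExactStructure E) : E ⥤ LexCat S :=
  ObjectProperty.lift _ preadditiveYoneda (yoneda_isLex S)

/-- The Yoneda embedding of `E` into the subcategory of compact objects of `Lex(E)`, given
a proof that all representable functors are compact. -/
def yonedaLexC (S : ExactStructure E) (hc : ∀ X : E, IsCompact.{u} ((yonedaLex S).obj X)) :
    E ⥤ LexCompact S :=
  ObjectProperty.lift _ (yonedaLex S) hc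

end Lex

section LFP

variable {C : Type*} [Category C]

/-- `X` is a filtered colimit of compact objects. -/
def IsFilteredColimitOfCompacts (X : C) : Prop :=
  ∃ (J : Type u) (_ : SmallCategory J) (_ : IsFiltered J) (F : J ⥤ C)
    (_ : ∀ j : J, IsCompact.{u} (F.obj j)),
    Nonempty ((t : Cocone F) ×' (IsColimit t) ×' (t.pt ≅ X))

/-- A category is locally finitely presented if it has (small) filtered colimits, its
compact objects form a skeletally small full subcategory, and every object is a filtered
colimit of compact objects. -/
def IsLocallyFinitelyPresented (C : Type*) [Category C] : Prop :=
  HasFilteredColimitsOfSize.{u, u} C ∧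
    EssentiallySmall.{u} (ObjectProperty.FullSubcategory (fun X : C => IsCompact.{u} X)) ∧
    ∀ X : C, IsFilteredColimitOfCompacts.{u} X

/-- AB5: small filtered colimits are exact, i.e. for every small filtered category `J`
(such that `C` has colimits of shape `J`), the colimit functor `(J ⥤ C) ⥤ C` preserves
finite limits. -/
def AB5P (C : Type*) [Category C] : Prop :=
  ∀ (J : Type u) (_ : SmallCategory J), IsFiltered J →
    ∀ (h : HasColimitsOfShape J C),
      Nonempty (PreservesFiniteLimits (@colim J _ C _ h))

/-- A Grothendieck category: an abelian category (`IsAbelianP` w.r.t. the given preadditive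
structure) with a generator and small colimits, in which small filtered colimits are
exact (AB5). -/
def IsGrothendieckP (C : Type*) [Category C] [Preadditive C] : Prop :=
  IsAbelianP C ∧ HasColimitsOfSize.{u, u} C ∧ (∃ G : C, IsSeparator G) ∧ AB5P.{u} C

end LFP


section CompactAPI

variable {A : Type v} [Category.{u} A]

lemma compact_fac {X : A} (hX : IsCompact.{u} X) {J : Type u} [SmallCategory J] [IsFiltered J]
    {F : J ⥤ A} {c : Cocone F} (hc : IsColimit c) (u : X ⟶ c.pt) :
    ∃ (j : J) (g : X ⟶ F.obj j), g ≫ c.ι.app j = u := by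
  obtain ⟨P⟩ := hX J ‹_› ‹_›
  have hc' := isColimitOfPreserves (coyoneda.obj (op X)) hc
  obtain ⟨j, g, hg⟩ := Types.jointly_surjective _ hc' u
  exact ⟨j, g, hg⟩

lemma compact_merge {X : A} (hX : IsCompact.{u} X) {J : Type u} [SmallCategory J] [IsFiltered J]
    {F : J ⥤ A} {c : Cocone F} (hc : IsColimit c) {j : J} (u v : X ⟶ F.obj j)
    (h : u ≫ c.ι.app j = v ≫ c.ι.app j) :
    ∃ (k : J) (w : j ⟶ k), u ≫ F.map w = v ≫ F.map w := by
  obtain ⟨P⟩ := hX J ‹_› ‹_›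
  have hc' := isColimitOfPreserves (coyoneda.obj (op X)) hc
  have h' : ((coyoneda.obj (op X)).mapCocone c).ι.app j u
      = ((coyoneda.obj (op X)).mapCocone c).ι.app j v := h
  obtain ⟨k, f, g, hfg⟩ := (Types.FilteredColimit.isColimit_eq_iff _ hc').mp h'
  refine ⟨_, f ≫ IsFiltered.coeqHom f g, ?_⟩
  have hc2 : f ≫ IsFiltered.coeqHom f g = g ≫ IsFiltered.coeqHom f g :=
    IsFiltered.coeq_condition f g
  have hfg' : u ≫ F.map f = v ≫ F.map g := hfg
  calc u ≫ F.map (f ≫ IsFiltered.coeqHom f g)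
      = (u ≫ F.map f) ≫ F.map (IsFiltered.coeqHom f g) := by simp
    _ = (v ≫ F.map g) ≫ F.map (IsFiltered.coeqHom f g) := by rw [hfg']
    _ = v ≫ F.map (g ≫ IsFiltered.coeqHom f g) := by simp
    _ = v ≫ F.map (f ≫ IsFiltered.coeqHom f g) := by rw [← hc2]

lemma isCompact_of {X : A}
    (hfac : ∀ (J : Type u) [SmallCategory J], IsFiltered J → ∀ (F : J ⥤ A) (c : Cocone F),
      IsColimit c → ∀ u : X ⟶ c.pt, ∃ (j : J) (g : X ⟶ F.obj j), g ≫ c.ι.app j = u)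
    (hmerge : ∀ (J : Type u) [SmallCategory J], IsFiltered J → ∀ (F : J ⥤ A) (c : Cocone F),
      IsColimit c → ∀ (j : J) (u v : X ⟶ F.obj j), u ≫ c.ι.app j = v ≫ c.ι.app j →
        ∃ (k : J) (w : j ⟶ k), u ≫ F.map w = v ≫ F.map w) :
    IsCompact.{u} X := by
  intro J instJ hJ
  refine ⟨{ preservesColimit := fun {F} => { preserves := fun {c} hc => ⟨?_⟩ } }⟩
  apply Types.FilteredColimit.isColimitOf
  · intro x
    obtain ⟨j, g, hg⟩ := hfac J hJ F c hc x
    exact ⟨j, g, hg.symm⟩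
  · intro i j xi xj hx
    have hx' : (xi ≫ F.map (IsFiltered.leftToMax i j)) ≫ c.ι.app (IsFiltered.max i j)
        = (xj ≫ F.map (IsFiltered.rightToMax i j)) ≫ c.ι.app (IsFiltered.max i j) := by
      have h1 : xi ≫ c.ι.app i = xj ≫ c.ι.app j := hx
      simp only [Category.assoc, c.w]
      exact h1
    obtain ⟨m, w, hw⟩ := hmerge J hJ F c hc _ _ _ hx'
    refine ⟨m, IsFiltered.leftToMax i j ≫ w, IsFiltered.rightToMax i j ≫ w, ?_⟩
    have : (xi ≫ F.map (IsFiltered.leftToMax i j)) ≫ F.map w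
        = (xj ≫ F.map (IsFiltered.rightToMax i j)) ≫ F.map w := hw
    show xi ≫ F.map _ = xj ≫ F.map _
    simpa using this

lemma isCompact_of_iso {X Y : A} (hX : IsCompact.{u} X) (e : X ≅ Y) : IsCompact.{u} Y := by
  refine isCompact_of ?_ ?_
  · intro J _ hJ F c hc u
    obtain ⟨j, g, hg⟩ := compact_fac hX hc (e.hom ≫ u)
    exact ⟨j, e.inv ≫ g, by rw [Category.assoc, hg]; simp⟩
  · intro J _ hJ F c hc j u v h
    obtain ⟨k, w, hw⟩ := compact_merge hX hc (e.hom ≫ u) (e.hom ≫ v)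
      (by rw [Category.assoc, Category.assoc, h])
    refine ⟨k, w, ?_⟩
    have := hw
    simp only [Category.assoc] at this
    exact (cancel_epi e.hom).mp (by simpa using this)

end CompactAPI


section Closure

variable {A : Type v} [Category.{u} A] [Abelian A]

lemma isCompact_of_isZero {X : A} (hX : IsZero X) : IsCompact.{u} X := by
  refine isCompact_of ?_ ?_
  · intro J _ hJ F c hc u
    obtain ⟨j⟩ : Nonempty J := IsFiltered.nonempty
    exact ⟨j, hX.to_ _, hX.eq_of_src _ _⟩
  · intro J _ hJ F c hc j u v h
    exact ⟨j, 𝟙 j, by rw [hX.eq_of_src u v]⟩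

lemma isCompact_biprod {X Y : A} (hX : IsCompact.{u} X) (hY : IsCompact.{u} Y) :
    IsCompact.{u} (X ⊞ Y) := by
  refine isCompact_of ?_ ?_
  · intro J _ hJ F c hc u
    obtain ⟨j₁, g₁, hg₁⟩ := compact_fac hX hc (biprod.inl ≫ u)
    obtain ⟨j₂, g₂, hg₂⟩ := compact_fac hY hc (biprod.inr ≫ u)
    refine ⟨IsFiltered.max j₁ j₂,
      biprod.desc (g₁ ≫ F.map (IsFiltered.leftToMax j₁ j₂))
        (g₂ ≫ F.map (IsFiltered.rightToMax j₁ j₂)), ?_⟩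
    apply biprod.hom_ext'
    · simp only [biprod.inl_desc_assoc, Category.assoc, c.w]
      exact hg₁
    · simp only [biprod.inr_desc_assoc, Category.assoc, c.w]
      exact hg₂
  · intro J _ hJ F c hc j u v h
    obtain ⟨k₁, w₁, hw₁⟩ := compact_merge hX hc (biprod.inl ≫ u) (biprod.inl ≫ v)
      (by simp only [Category.assoc, h])
    obtain ⟨k₂, w₂, hw₂⟩ := compact_merge hY hc (biprod.inr ≫ u) (biprod.inr ≫ v)
      (by simp only [Category.assoc, h])
    obtain ⟨l, a, b, hab⟩ := IsFiltered.span w₁ w₂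
    refine ⟨l, w₁ ≫ a, ?_⟩
    apply biprod.hom_ext'
    · calc biprod.inl ≫ u ≫ F.map (w₁ ≫ a)
          = ((biprod.inl ≫ u) ≫ F.map w₁) ≫ F.map a := by simp
        _ = ((biprod.inl ≫ v) ≫ F.map w₁) ≫ F.map a := by rw [hw₁]
        _ = biprod.inl ≫ v ≫ F.map (w₁ ≫ a) := by simp
    · have e : F.map w₁ ≫ F.map a = F.map w₂ ≫ F.map b := by
        rw [← F.map_comp, ← F.map_comp, hab]
      calc biprod.inr ≫ u ≫ F.map (w₁ ≫ a)
          = ((biprod.inr ≫ u) ≫ F.map w₂) ≫ F.map b := by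
            rw [F.map_comp]; simp only [Category.assoc, ← e]
        _ = ((biprod.inr ≫ v) ≫ F.map w₂) ≫ F.map b := by rw [hw₂]
        _ = biprod.inr ≫ v ≫ F.map (w₁ ≫ a) := by
            rw [F.map_comp]; simp only [Category.assoc, ← e]

lemma isCompact_cokernel {X Y : A} (hX : IsCompact.{u} X) (hY : IsCompact.{u} Y)
    (f : X ⟶ Y) : IsCompact.{u} (cokernel f) := by
  refine isCompact_of ?_ ?_
  · intro J _ hJ F c hc u
    -- factor `cokernel.π f ≫ u` through a stage
    obtain ⟨j, g, hg⟩ := compact_fac hY hc (cokernel.π f ≫ u)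
    -- `f ≫ g` dies in the colimit, so it dies at a later stage
    have h0 : (f ≫ g) ≫ c.ι.app j = (0 : X ⟶ F.obj j) ≫ c.ι.app j := by
      rw [Category.assoc, hg, ← Category.assoc, cokernel.condition, zero_comp, zero_comp]
    obtain ⟨k, w, hw⟩ := compact_merge hX hc (f ≫ g) 0 h0
    rw [zero_comp] at hw
    have hw' : f ≫ g ≫ F.map w = 0 := by rw [← Category.assoc]; exact hw
    refine ⟨k, cokernel.desc f (g ≫ F.map w) hw', ?_⟩
    have : cokernel.π f ≫ cokernel.desc f (g ≫ F.map w) hw' ≫ c.ι.app k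
        = cokernel.π f ≫ u := by
      rw [cokernel.π_desc_assoc, Category.assoc, c.w, hg]
    exact (cancel_epi (cokernel.π f)).mp this
  · intro J _ hJ F c hc j u v h
    obtain ⟨k, w, hw⟩ := compact_merge hY hc (cokernel.π f ≫ u) (cokernel.π f ≫ v)
      (by simp only [Category.assoc, h])
    refine ⟨k, w, ?_⟩
    apply (cancel_epi (cokernel.π f)).mp
    simpa using hw

/-- Mono test along a separating family. -/
lemma mono_of_separating {C : Type v} [Category.{u} C] {S : Set C} (hS : ObjectProperty.IsSeparating S)
    {X Y : C} (f : X ⟶ Y)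
    (h : ∀ G ∈ S, ∀ u v : G ⟶ X, u ≫ f = v ≫ f → u = v) : Mono f := by
  refine ⟨fun {Z} u v huv => ?_⟩
  apply hS
  intro G hG g
  exact h G hG (g ≫ u) (g ≫ v) (by simp only [Category.assoc, huv])

end Closure


section AB5Forward

variable {A : Type v} [Category.{u} A] [Abelian A]

lemma colim_map_mono {S : Set A} (hsep : ObjectProperty.IsSeparating S)
    (hcomp : ∀ X ∈ S, IsCompact.{u} X) {J : Type u} [SmallCategory J] [IsFiltered J]
    [HasColimitsOfShape J A] {F G : J ⥤ A} (η : F ⟶ G) (hmono : ∀ j, Mono (η.app j)) :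
    Mono ((colim : (J ⥤ A) ⥤ A).map η) := by
  apply mono_of_separating hsep
  intro C hC u v huv
  have hCc := hcomp C hC
  obtain ⟨j₁, u₁, hu₁⟩ := compact_fac hCc (colimit.isColimit F) u
  obtain ⟨j₂, v₂, hv₂⟩ := compact_fac hCc (colimit.isColimit F) v
  set k := IsFiltered.max j₁ j₂ with hk
  set u' := u₁ ≫ F.map (IsFiltered.leftToMax j₁ j₂) with hu'
  set v' := v₂ ≫ F.map (IsFiltered.rightToMax j₁ j₂) with hv'
  have hu : u' ≫ colimit.ι F k = u := by
    rw [hu', Category.assoc, colimit.w]; exact hu₁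
  have hv : v' ≫ colimit.ι F k = v := by
    rw [hv', Category.assoc, colimit.w]; exact hv₂
  have key : (u' ≫ η.app k) ≫ colimit.ι G k = (v' ≫ η.app k) ≫ colimit.ι G k := by
    have e : ∀ (g : C ⟶ F.obj k), (g ≫ η.app k) ≫ colimit.ι G k
        = (g ≫ colimit.ι F k) ≫ colim.map η := fun g => by
      rw [Category.assoc, Category.assoc, colimit.ι_map]
    rw [e u', e v', hu, hv, huv]
  obtain ⟨l, w, hw⟩ := compact_merge hCc (colimit.isColimit G) _ _ key
  have h2 : u' ≫ F.map w = v' ≫ F.map w := by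
    have h3 : (u' ≫ F.map w) ≫ η.app l = (v' ≫ F.map w) ≫ η.app l := by
      have n := η.naturality w
      calc (u' ≫ F.map w) ≫ η.app l = u' ≫ F.map w ≫ η.app l := by simp
        _ = u' ≫ η.app k ≫ G.map w := by rw [n]
        _ = (u' ≫ η.app k) ≫ G.map w := by simp
        _ = (v' ≫ η.app k) ≫ G.map w := hw
        _ = v' ≫ F.map w ≫ η.app l := by
            simp only [Category.assoc]; rw [← n]
        _ = (v' ≫ F.map w) ≫ η.app l := by simp
    haveI := hmono l
    exact (cancel_mono (η.app l)).mp h3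
  have hstep : ∀ (g : C ⟶ F.obj k), (g ≫ F.map w) ≫ colimit.ι F l = g ≫ colimit.ι F k :=
    fun g => by rw [Category.assoc, colimit.w]
  calc u = u' ≫ colimit.ι F k := hu.symm
    _ = (u' ≫ F.map w) ≫ colimit.ι F l := (hstep u').symm
    _ = (v' ≫ F.map w) ≫ colimit.ι F l := by rw [h2]
    _ = v' ≫ colimit.ι F k := hstep v'
    _ = v := hv

lemma ab5p_of_compact_separating {S : Set A} (hsep : ObjectProperty.IsSeparating S)
    (hcomp : ∀ X ∈ S, IsCompact.{u} X) : AB5P.{u} A := by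
  intro J instJ hJ h
  letI := h
  haveI : (colim : (J ⥤ A) ⥤ A).IsLeftAdjoint := ⟨_, ⟨colimConstAdj⟩⟩
  haveI : PreservesColimitsOfSize.{u, u} (colim : (J ⥤ A) ⥤ A) :=
    (colimConstAdj (J := J) (C := A)).leftAdjoint_preservesColimits
  refine ⟨?_⟩
  haveI : ∀ {X Y : J ⥤ A} (η : X ⟶ Y),
      PreservesLimit (parallelPair η 0) (colim : (J ⥤ A) ⥤ A) := by
    intro X Y η
    apply preservesLimit_of_preserves_limit_cone (kernelIsKernel η)
    apply (isLimitMapConeForkEquiv' _ (kernel.condition η)).symm ?_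
    set k := kernel.ι η with hkdef
    haveI : Mono ((colim : (J ⥤ A) ⥤ A).map k) :=
      colim_map_mono hsep hcomp k (fun j => inferInstance)
    have hcoker : IsColimit (CokernelCofork.ofπ ((colim : (J ⥤ A) ⥤ A).map (cokernel.π k))
        (by rw [← Functor.map_comp, cokernel.condition, Functor.map_zero])) :=
      (isColimitMapCoconeCoforkEquiv' (colim : (J ⥤ A) ⥤ A) (cokernel.condition k))
        (isColimitOfPreserves colim (cokernelIsCokernel k))
    have hker := Abelian.monoIsKernelOfCokernel
      (CokernelCofork.ofπ ((colim : (J ⥤ A) ⥤ A).map (cokernel.π k))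
        (by rw [← Functor.map_comp, cokernel.condition, Functor.map_zero])) hcoker
    haveI : Mono ((colim : (J ⥤ A) ⥤ A).map (Abelian.factorThruCoimage η)) := by
      apply colim_map_mono hsep hcomp
      intro j
      infer_instance
    have heq : (colim : (J ⥤ A) ⥤ A).map η
        = (colim : (J ⥤ A) ⥤ A).map (cokernel.π k) ≫
          (colim : (J ⥤ A) ⥤ A).map (Abelian.factorThruCoimage η) := by
      rw [← Functor.map_comp]
      congr 1
      exact (Abelian.coimage.fac η).symm
    exact isKernelCompMono hker ((colim : (J ⥤ A) ⥤ A).map (Abelian.factorThruCoimage η)) heq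
  exact Functor.preservesFiniteLimits_of_preservesKernels _

end AB5Forward


section Forward

variable {A : Type v} [Category.{u} A] [Abelian A]

lemma compacts_separating_of_lfp (h : ∀ X : A, IsFilteredColimitOfCompacts.{u} X) :
    ObjectProperty.IsSeparating {X : A | IsCompact.{u} X} := by
  intro X Y f g hfg
  obtain ⟨J, iJ, hJ, F, hFc, ⟨t, ht, e⟩⟩ := h X
  have key : ∀ j, t.ι.app j ≫ e.hom ≫ f = t.ι.app j ≫ e.hom ≫ g := by
    intro j
    have := hfg (F.obj j) (hFc j) (t.ι.app j ≫ e.hom)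
    simpa using this
  have h2 : e.hom ≫ f = e.hom ≫ g := ht.hom_ext (fun j => by
    simpa using key j)
  exact (cancel_epi e.hom).mp h2

lemma forward_direction (h : IsLocallyFinitelyPresented.{u} A) :
    HasColimitsOfSize.{u, u} A ∧ (∃ G : A, IsSeparator G) ∧ AB5P.{u} A ∧
      ∃ S : Set A, (∀ X ∈ S, IsCompact.{u} X) ∧ ObjectProperty.IsSeparating S := by
  obtain ⟨hfilt, hsmall, hcolim⟩ := h
  haveI := hfilt
  haveI := hsmall
  have hsep : ObjectProperty.IsSeparating {X : A | IsCompact.{u} X} := compacts_separating_of_lfp hcolim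
  haveI hco : HasColimitsOfSize.{u, u} A := has_colimits_of_finite_and_filtered
  refine ⟨hco, ?_, ab5p_of_compact_separating hsep (fun X hX => hX), 
    ⟨{X : A | IsCompact.{u} X}, fun X hX => hX, hsep⟩⟩
  -- a separator: the coproduct over a small skeleton of the compact objects
  let e := equivSmallModel.{u} (ObjectProperty.FullSubcategory (fun X : A => IsCompact.{u} X))
  let f : SmallModel.{u} (ObjectProperty.FullSubcategory (fun X : A => IsCompact.{u} X)) → A :=
    fun m => (e.inverse.obj m).obj
  haveI : HasCoproduct f := inferInstance
  refine ⟨∐ f, (isSeparator_sigma f).mpr ?_⟩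
  intro X Y u v huv
  apply hsep
  intro C hC w
  let ψ : C ≅ f (e.functor.obj ⟨C, hC⟩) :=
    (ObjectProperty.ι _).mapIso (e.unitIso.app ⟨C, hC⟩)
  have hr : ObjectProperty.ofObj f (f (e.functor.obj ⟨C, hC⟩)) := ObjectProperty.ofObj_apply f _
  have := huv _ hr (ψ.inv ≫ w)
  calc w ≫ u = ψ.hom ≫ (ψ.inv ≫ w) ≫ u := by simp
    _ = ψ.hom ≫ (ψ.inv ≫ w) ≫ v := by rw [this]
    _ = w ≫ v := by simp

end Forward


section Backward

attribute [local instance] Abelian.hasFiniteBiproducts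

open ZeroObject

variable {A : Type v} [Category.{u} A] [Abelian A]

lemma exists_epi_from_finite_power [HasColimitsOfSize.{u, u} A] {G : A} (hG : IsSeparator G)
    {S : Set A} (hsep : ObjectProperty.IsSeparating S) (hS : ∀ C ∈ S, IsCompact.{u} C)
    {X : A} (hX : IsCompact.{u} X) :
    ∃ (n : ℕ) (q : (⨁ (fun _ : Fin n => G)) ⟶ X), Epi q := by
  classical
  -- the filtered diagram of images of finite subcoproducts of copies of `G` over `X`
  let P : Finset (G ⟶ X) → A := fun F => ⨁ (fun _ : ↥F => G)
  let d : ∀ F : Finset (G ⟶ X), P F ⟶ X := fun F => biproduct.desc (fun i => (i : G ⟶ X))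
  let ym : ∀ {F F' : Finset (G ⟶ X)}, F ≤ F' → (P F ⟶ P F') := fun {F F'} h =>
    biproduct.desc (fun i => biproduct.ι (fun _ : ↥F' => G) ⟨i.1, h i.2⟩)
  have hymd : ∀ {F F' : Finset (G ⟶ X)} (h : F ≤ F'), ym h ≫ d F' = d F := by
    intro F F' h
    apply biproduct.hom_ext'
    intro i
    simp [ym, d, P]
  have hd0 : ∀ {F F' : Finset (G ⟶ X)}, F ≤ F' →
      Abelian.image.ι (d F) ≫ cokernel.π (d F') = 0 := by
    intro F F' h
    have h1 : Abelian.factorThruImage (d F) ≫ Abelian.image.ι (d F) ≫ cokernel.π (d F')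
        = Abelian.factorThruImage (d F) ≫ 0 := by
      rw [comp_zero, ← Category.assoc, Abelian.image.fac, ← hymd h, Category.assoc,
        cokernel.condition, comp_zero]
    exact (cancel_epi (Abelian.factorThruImage (d F))).mp h1
  let Im : Finset (G ⟶ X) ⥤ A :=
  { obj := fun F => Abelian.image (d F)
    map := fun {F F'} h =>
      kernel.lift (cokernel.π (d F')) (Abelian.image.ι (d F)) (hd0 (leOfHom h))
    map_id := fun F => by
      apply (cancel_mono (Abelian.image.ι (d F))).mp
      simp [kernel.lift_ι]
    map_comp := fun {F F' F''} h h' => by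
      apply (cancel_mono (Abelian.image.ι (d F''))).mp
      simp [kernel.lift_ι] }
  have hImι : ∀ {F F' : Finset (G ⟶ X)} (h : F ⟶ F'),
      Im.map h ≫ Abelian.image.ι (d F') = Abelian.image.ι (d F) := by
    intro F F' h
    simp [Im, kernel.lift_ι]
  let c : Cocone Im :=
  { pt := X
    ι :=
    { app := fun F => Abelian.image.ι (d F)
      naturality := fun {F F'} h => by
        simp only [Functor.const_obj_obj, Functor.const_obj_map, Category.comp_id]
        exact hImι h } }
  -- the canonical comparison map is an isomorphism
  let lam : colimit Im ⟶ X := colimit.desc Im c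
  have hlam : ∀ F, colimit.ι Im F ≫ lam = Abelian.image.ι (d F) := fun F =>
    colimit.ι_desc c F
  haveI hmono : Mono lam := by
    apply mono_of_separating hsep
    intro C hC u v huv
    obtain ⟨F₁, u₁, hu₁⟩ := compact_fac (hS C hC) (colimit.isColimit Im) u
    obtain ⟨F₂, v₂, hv₂⟩ := compact_fac (hS C hC) (colimit.isColimit Im) v
    set F := F₁ ⊔ F₂ with hF
    let h₁ : F₁ ⟶ F := homOfLE le_sup_left
    let h₂ : F₂ ⟶ F := homOfLE le_sup_right
    have hu : (u₁ ≫ Im.map h₁) ≫ colimit.ι Im F = u := by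
      rw [Category.assoc, colimit.w]; exact hu₁
    have hv : (v₂ ≫ Im.map h₂) ≫ colimit.ι Im F = v := by
      rw [Category.assoc, colimit.w]; exact hv₂
    have key : (u₁ ≫ Im.map h₁) ≫ Abelian.image.ι (d F)
        = (v₂ ≫ Im.map h₂) ≫ Abelian.image.ι (d F) := by
      have e : ∀ (g : C ⟶ Im.obj F), g ≫ Abelian.image.ι (d F)
          = (g ≫ colimit.ι Im F) ≫ lam := fun g => by
        rw [Category.assoc, hlam]
      rw [e, e, hu, hv, huv]
    have := (cancel_mono (Abelian.image.ι (d F))).mp key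
    rw [← hu, ← hv, this]
  haveI hepi : Epi lam := by
    refine ⟨fun {T} a b hab => ?_⟩
    apply (isSeparator_def G).mp hG
    intro w
    have hfac : ∃ p : G ⟶ colimit Im, p ≫ lam = w := by
      refine ⟨biproduct.ι (fun _ : ↥({w} : Finset (G ⟶ X)) => G)
        ⟨w, Finset.mem_singleton_self w⟩ ≫ Abelian.factorThruImage (d {w})
          ≫ colimit.ι Im {w}, ?_⟩
      simp only [Category.assoc, hlam]
      rw [Abelian.image.fac]
      simp [d]
    obtain ⟨p, hp⟩ := hfac
    rw [← hp]
    simp only [Category.assoc]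
    rw [hab]
  haveI : IsIso lam := isIso_of_mono_of_epi lam
  -- transport the colimit along `lam` and use compactness of `X`
  have hc : IsColimit c :=
    IsColimit.ofIsoColimit (colimit.isColimit Im)
      (Cocones.ext (asIso lam) (fun F => hlam F))
  obtain ⟨F, r, hr⟩ := compact_fac hX hc (𝟙 X)
  -- `c.ι.app F = Abelian.image.ι (d F)` is a split epi and a mono, hence iso
  haveI : IsSplitEpi (Abelian.image.ι (d F)) := ⟨⟨⟨r, hr⟩⟩⟩
  haveI : IsIso (Abelian.image.ι (d F)) := isIso_of_mono_of_epi _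
  haveI hdF : Epi (d F) := by
    rw [show d F = Abelian.factorThruImage (d F) ≫ Abelian.image.ι (d F) from
      (Abelian.image.fac (d F)).symm]
    exact epi_comp _ _
  -- reindex by `Fin n`
  let ε := (F : Finset (G ⟶ X)).equivFin
  refine ⟨F.card, biproduct.desc (fun i => ((ε.symm i : ↥F) : G ⟶ X)), ?_⟩
  have hψ : biproduct.desc (fun i : ↥F => biproduct.ι (fun _ : Fin F.card => G) (ε i)) ≫
      biproduct.desc (fun i => ((ε.symm i : ↥F) : G ⟶ X)) = d F := by
    apply biproduct.hom_ext'
    intro i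
    simp [d]
  haveI : Epi (biproduct.desc (fun i : ↥F => biproduct.ι (fun _ : Fin F.card => G) (ε i)) ≫
      biproduct.desc (fun i => ((ε.symm i : ↥F) : G ⟶ X))) := by
    rw [hψ]; exact hdF
  exact epi_of_epi (biproduct.desc (fun i : ↥F => biproduct.ι (fun _ : Fin F.card => G) (ε i))) _

lemma iso_of_same_kernel {Y X₁ X₂ : A} (q₁ : Y ⟶ X₁) (q₂ : Y ⟶ X₂) [Epi q₁] [Epi q₂]
    (h : Subobject.mk (kernel.ι q₁) = Subobject.mk (kernel.ι q₂)) :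
    Nonempty (X₁ ≅ X₂) := by
  have hi : (Subobject.isoOfMkEqMk (kernel.ι q₁) (kernel.ι q₂) h).hom ≫ kernel.ι q₂
      = kernel.ι q₁ := Subobject.ofMkLEMk_comp h.le
  have e1 : cokernel (kernel.ι q₁) ≅ cokernel (kernel.ι q₂) :=
    cokernel.mapIso (f' := kernel.ι q₂)
      (p := Subobject.isoOfMkEqMk (kernel.ι q₁) (kernel.ι q₂) h)
      (q := Iso.refl Y) (w := by simpa using hi.symm)
  have c₁ : cokernel (kernel.ι q₁) ≅ X₁ :=
    IsColimit.coconePointUniqueUpToIso (cokernelIsCokernel (kernel.ι q₁))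
      (Abelian.epiIsCokernelOfKernel
        (KernelFork.ofι (kernel.ι q₁) (kernel.condition q₁)) (kernelIsKernel q₁))
  have c₂ : cokernel (kernel.ι q₂) ≅ X₂ :=
    IsColimit.coconePointUniqueUpToIso (cokernelIsCokernel (kernel.ι q₂))
      (Abelian.epiIsCokernelOfKernel
        (KernelFork.ofι (kernel.ι q₂) (kernel.condition q₂)) (kernelIsKernel q₂))
  exact ⟨c₁.symm ≪≫ e1 ≪≫ c₂⟩

lemma essentiallySmall_compacts [HasColimitsOfSize.{u, u} A] {G : A} (hG : IsSeparator G)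
    {S : Set A} (hsep : ObjectProperty.IsSeparating S) (hS : ∀ C ∈ S, IsCompact.{u} C) :
    EssentiallySmall.{u} (ObjectProperty.FullSubcategory (fun X : A => IsCompact.{u} X)) := by
  haveI : WellPowered.{u} A := wellPowered_of_isSeparator G hG
  rw [essentiallySmall_iff]
  refine ⟨?_, inferInstance⟩
  letI sd := isIsomorphicSetoid (ObjectProperty.FullSubcategory (fun X : A => IsCompact.{u} X))
  have key : ∀ C : ObjectProperty.FullSubcategory (fun X : A => IsCompact.{u} X),
      ∃ (n : ℕ) (q : (⨁ (fun _ : Fin n => G)) ⟶ C.obj), Epi q :=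
    fun C => exists_epi_from_finite_power hG hsep hS C.property
  have hker : ∀ {X₁ X₂ : A} {n₁ n₂ : ℕ} (q₁ : (⨁ (fun _ : Fin n₁ => G)) ⟶ X₁)
      (q₂ : (⨁ (fun _ : Fin n₂ => G)) ⟶ X₂), Epi q₁ → Epi q₂ →
      (⟨n₁, equivShrink _ (Subobject.mk (kernel.ι q₁))⟩ :
          Σ n : ℕ, Shrink.{u} (Subobject (⨁ (fun _ : Fin n => G))))
        = ⟨n₂, equivShrink _ (Subobject.mk (kernel.ι q₂))⟩ →
      Nonempty (X₁ ≅ X₂) := by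
    intro X₁ X₂ n₁ n₂ q₁ q₂ he₁ he₂ h
    obtain ⟨h1, h2⟩ := Sigma.mk.inj_iff.mp h
    subst h1
    rw [heq_iff_eq] at h2
    exact iso_of_same_kernel q₁ q₂ ((equivShrink _).injective h2)
  have : Small.{u} (Quotient sd) := by
    apply small_of_injective
      (f := fun s : Quotient sd => (⟨(key s.out).choose,
        equivShrink _ (Subobject.mk (kernel.ι (key s.out).choose_spec.choose))⟩ :
          Σ n : ℕ, Shrink.{u} (Subobject (⨁ (fun _ : Fin n => G)))))
    intro s₁ s₂ hf
    dsimp only at hf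
    obtain ⟨e⟩ := hker (key s₁.out).choose_spec.choose (key s₂.out).choose_spec.choose
      (key s₁.out).choose_spec.choose_spec (key s₂.out).choose_spec.choose_spec hf
    apply Quotient.out_equiv_out.mp
    exact ⟨(ObjectProperty.ι _).preimageIso e⟩
  exact this

lemma filtered_colimit_of_compacts_aux [HasColimitsOfSize.{u, u} A]
    {S : Set A} (hsep : ObjectProperty.IsSeparating S) (hS : ∀ C ∈ S, IsCompact.{u} C)
    {M : Type u} [SmallCategory M] (ι : M ⥤ A) [ι.Full] [ι.Faithful]
    (hcomp : ∀ m : M, IsCompact.{u} (ι.obj m))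
    (hall : ∀ (C : A), IsCompact.{u} C → ∃ m : M, Nonempty (ι.obj m ≅ C))
    (X : A) : IsFilteredColimitOfCompacts.{u} X := by
  classical
  set J := CostructuredArrow ι X with hJdef
  -- basic constructors for objects and morphisms of `J`
  let ψ : ∀ (C : A) (hC : IsCompact.{u} C), ι.obj (hall C hC).choose ≅ C :=
    fun C hC => (hall C hC).choose_spec.some
  let mk : ∀ (C : A) (hC : IsCompact.{u} C), (C ⟶ X) → J :=
    fun C hC f => CostructuredArrow.mk ((ψ C hC).hom ≫ f)
  have mk_hom : ∀ (C : A) (hC : IsCompact.{u} C) (f : C ⟶ X),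
      (mk C hC f).hom = (ψ C hC).hom ≫ f := fun C hC f => rfl
  have mkH : ∀ (j : J) (C' : A) (hC' : IsCompact.{u} C') (f' : C' ⟶ X)
      (φ : ι.obj j.left ⟶ C'), φ ≫ f' = j.hom →
      ∃ h : j ⟶ mk C' hC' f', ι.map h.left = φ ≫ (ψ C' hC').inv := by
    intro j C' hC' f' φ w
    refine ⟨CostructuredArrow.homMk (ι.preimage (φ ≫ (ψ C' hC').inv)) ?_, ?_⟩
    · rw [Functor.map_preimage, mk_hom C' hC' f']
      simp only [Category.assoc, Iso.inv_hom_id_assoc]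
      exact w
    · simp only [CostructuredArrow.homMk_left, Functor.map_preimage]
  -- `J` is filtered
  haveI hJFE : IsFilteredOrEmpty J := by
    refine ⟨?_, ?_⟩
    · intro j₁ j₂
      obtain ⟨h₁, -⟩ := mkH j₁ (ι.obj j₁.left ⊞ ι.obj j₂.left)
        (isCompact_biprod (hcomp _) (hcomp _)) (biprod.desc j₁.hom j₂.hom)
        biprod.inl (by simp)
      obtain ⟨h₂, -⟩ := mkH j₂ (ι.obj j₁.left ⊞ ι.obj j₂.left)
        (isCompact_biprod (hcomp _) (hcomp _)) (biprod.desc j₁.hom j₂.hom)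
        biprod.inr (by simp)
      exact ⟨_, h₁, h₂, trivial⟩
    · intro j₁ j₂ g₁ g₂
      have hzero : (ι.map g₁.left - ι.map g₂.left) ≫ j₂.hom = 0 := by
        rw [Preadditive.sub_comp, CostructuredArrow.w, CostructuredArrow.w, sub_self]
      obtain ⟨h, hh⟩ := mkH j₂ (cokernel (ι.map g₁.left - ι.map g₂.left))
        (isCompact_cokernel (hcomp _) (hcomp _) _)
        (cokernel.desc _ j₂.hom hzero) (cokernel.π _) (cokernel.π_desc _ _ _)
      refine ⟨_, h, ?_⟩
      apply CostructuredArrow.hom_ext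
      apply ι.map_injective
      have hπ : ι.map g₁.left ≫ cokernel.π (ι.map g₁.left - ι.map g₂.left)
          = ι.map g₂.left ≫ cokernel.π (ι.map g₁.left - ι.map g₂.left) := by
        rw [← sub_eq_zero, ← Preadditive.sub_comp]
        exact cokernel.condition _
      have e1 : (g₁ ≫ h).left = g₁.left ≫ h.left := rfl
      have e2 : (g₂ ≫ h).left = g₂.left ≫ h.left := rfl
      rw [e1, e2, Functor.map_comp, Functor.map_comp, hh, ← Category.assoc,
        ← Category.assoc, hπ]
  haveI : Nonempty J := ⟨mk 0 (isCompact_of_isZero (isZero_zero A)) 0⟩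
  haveI hJF : IsFiltered J := { }
  -- the canonical diagram and cocone
  set D : J ⥤ A := CostructuredArrow.proj ι X ⋙ ι with hDdef
  let cc : Cocone D :=
  { pt := X
    ι :=
    { app := fun j => j.hom
      naturality := fun {j j'} g => by
        simp only [Functor.const_obj_obj, Functor.const_obj_map, Category.comp_id]
        exact (CostructuredArrow.w g).trans (Category.comp_id _).symm } }
  let lam : colimit D ⟶ X := colimit.desc D cc
  have hlam : ∀ j : J, colimit.ι D j ≫ lam = j.hom := fun j => colimit.ι_desc cc j
  haveI hmono : Mono lam := by
    apply mono_of_separating hsep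
    intro C hC u v huv
    obtain ⟨j₁, u₁, hu₁⟩ := compact_fac (hS C hC) (colimit.isColimit D) u
    obtain ⟨j₂, v₂, hv₂⟩ := compact_fac (hS C hC) (colimit.isColimit D) v
    set j := IsFiltered.max j₁ j₂ with hj
    set u' : C ⟶ D.obj j := u₁ ≫ D.map (IsFiltered.leftToMax j₁ j₂) with hu'
    set v' : C ⟶ D.obj j := v₂ ≫ D.map (IsFiltered.rightToMax j₁ j₂) with hv'
    have hu : u' ≫ colimit.ι D j = u := by
      rw [hu', Category.assoc, colimit.w]; exact hu₁
    have hv : v' ≫ colimit.ι D j = v := by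
      rw [hv', Category.assoc, colimit.w]; exact hv₂
    have key : (u' - v') ≫ j.hom = 0 := by
      have e : ∀ g : C ⟶ D.obj j, g ≫ j.hom = (g ≫ colimit.ι D j) ≫ lam := fun g => by
        rw [Category.assoc, hlam]
      erw [Preadditive.sub_comp, e, e, hu, hv, huv, sub_self]
    obtain ⟨h, hh⟩ := mkH j (cokernel (u' - v'))
      (isCompact_cokernel (hS C hC) (hcomp _) _)
      (cokernel.desc _ j.hom key) (cokernel.π _) (cokernel.π_desc _ _ _)
    have hπ : u' ≫ cokernel.π (u' - v') = v' ≫ cokernel.π (u' - v') := by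
      rw [← sub_eq_zero, ← Preadditive.sub_comp]
      exact cokernel.condition _
    have hDmap : u' ≫ D.map h = v' ≫ D.map h := by
      show u' ≫ ι.map h.left = v' ≫ ι.map h.left
      erw [hh, ← Category.assoc, ← Category.assoc, hπ]
      rfl
    have hcol : ∀ g : C ⟶ D.obj j, g ≫ colimit.ι D j = (g ≫ D.map h) ≫ colimit.ι D _ :=
      fun g => by rw [Category.assoc, colimit.w]
    rw [← hu, ← hv, hcol u', hcol v', hDmap]
  haveI hepi : Epi lam := by
    refine ⟨fun {T} a b hab => ?_⟩
    apply hsep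
    intro C hC w
    have : ∃ p : C ⟶ colimit D, p ≫ lam = w := by
      refine ⟨(ψ C (hS C hC)).inv ≫ colimit.ι D (mk C (hS C hC) w), ?_⟩
      erw [Category.assoc, hlam, mk_hom C (hS C hC) w]
      simp
    obtain ⟨p, hp⟩ := this
    rw [← hp]
    simp only [Category.assoc]
    rw [hab]
  haveI : IsIso lam := isIso_of_mono_of_epi lam
  have hc : IsColimit cc :=
    IsColimit.ofIsoColimit (colimit.isColimit D)
      (Cocones.ext (asIso lam) (fun j => hlam j))
  exact ⟨J, inferInstance, hJF, D, fun j => hcomp j.left, ⟨cc, hc, Iso.refl X⟩⟩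

lemma backward_direction
    (h : HasColimitsOfSize.{u, u} A ∧ (∃ G : A, IsSeparator G) ∧ AB5P.{u} A ∧
      ∃ S : Set A, (∀ X ∈ S, IsCompact.{u} X) ∧ ObjectProperty.IsSeparating S) :
    IsLocallyFinitelyPresented.{u} A := by
  obtain ⟨hco, ⟨G, hG⟩, hab5, S, hS, hsep⟩ := h
  haveI := hco
  have hsm := essentiallySmall_compacts hG hsep hS
  haveI := hsm
  refine ⟨⟨fun J _ _ => inferInstance⟩, hsm, ?_⟩
  intro X
  let e := equivSmallModel.{u} (ObjectProperty.FullSubcategory (fun Y : A => IsCompact.{u} Y))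
  apply filtered_colimit_of_compacts_aux hsep hS
    (e.inverse ⋙ ObjectProperty.ι (fun Y : A => IsCompact.{u} Y))
  · exact fun m => (e.inverse.obj m).property
  · intro C hC
    exact ⟨e.functor.obj ⟨C, hC⟩,
      ⟨(ObjectProperty.ι _).mapIso ((e.unitIso.app ⟨C, hC⟩).symm)⟩⟩

end Backward

universe v

/-- An abelian category is locally finitely presented if and only if it is a Grothendieck
category admitting a generating (separating) set of compact objects. -/
theorem statement_16 {A : Type v} [Category.{u} A] [Abelian A] :
    IsLocallyFinitelyPresented.{u} A ↔
      (HasColimitsOfSize.{u, u} A ∧ (∃ G : A, IsSeparator G) ∧ AB5P.{u} A ∧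
        ∃ S : Set A, (∀ X ∈ S, IsCompact.{u} X) ∧ ObjectProperty.IsSeparating S) :=
  ⟨forward_direction, backward_direction⟩

end Env
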